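/- (Imbalance Lemma) After completing one full cycle of Osborne's algorithm, the ℓ₁ norm of the gradient of φ at the end-of-cycle iterate u_{k+1} is bounded by the sum of the row/column imbalances at the times the coordinates were updated within the cycle: ‖∇φ(u_{k+1})‖₁ ≤ Σ_{j=2}^n |r_j(u_{k,j}) - c_j(u_{k,j})|. -/

import Mathlib

open Real Finset

noncomputable def rowSum {n : ℕ} (A : Matrix (Fin n) (Fin n) ℝ) (u : Fin n → ℝ) (j : Fin n) : ℝ :=
  ∑ i, Real.exp (u j - u i) * A j i

noncomputable def colSum {n : ℕ} (A : Matrix (Fin n) (Fin n) ℝ) (u : Fin n → ℝ) (j : Fin n) : ℝ :=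
  ∑ i, Real.exp (u i - u j) * A i j

noncomputable def potential {n : ℕ} (A : Matrix (Fin n) (Fin n) ℝ) (u : Fin n → ℝ) : ℝ :=
  ∑ i, ∑ j, Real.exp (u i - u j) * A i j

/-- One Osborne update: balance the j-th row/column pair. -/
noncomputable def osborneUpdate {n : ℕ} (A : Matrix (Fin n) (Fin n) ℝ)
    (u : Fin n → ℝ) (j : Fin n) : Fin n → ℝ :=
  Function.update u j
    (u j + (1 / 2) * (Real.log (colSum A u j) - Real.log (rowSum A u j)))

lemma rowSum_update_ne {n : ℕ} (A : Matrix (Fin n) (Fin n) ℝ) (u : Fin n → ℝ)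
    (l j : Fin n) (hlj : l ≠ j) (w : ℝ) :
    rowSum A (Function.update u l w) j
      = rowSum A u j + (Real.exp (u j - w) - Real.exp (u j - u l)) * A j l := by
  unfold rowSum
  rw [← Finset.sum_erase_add _ _ (Finset.mem_univ l),
      ← Finset.sum_erase_add Finset.univ (fun i => Real.exp (u j - u i) * A j i) (Finset.mem_univ l)]
  have h1 : ∀ i ∈ Finset.univ.erase l,
      Real.exp (Function.update u l w j - Function.update u l w i) * A j i
        = Real.exp (u j - u i) * A j i := by
    intro i hi
    rw [Function.update_of_ne (Finset.ne_of_mem_erase hi), Function.update_of_ne hlj.symm]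
  rw [Finset.sum_congr rfl h1, Function.update_self, Function.update_of_ne hlj.symm]
  ring

lemma colSum_update_ne {n : ℕ} (A : Matrix (Fin n) (Fin n) ℝ) (u : Fin n → ℝ)
    (l j : Fin n) (hlj : l ≠ j) (w : ℝ) :
    colSum A (Function.update u l w) j
      = colSum A u j + (Real.exp (w - u j) - Real.exp (u l - u j)) * A l j := by
  unfold colSum
  rw [← Finset.sum_erase_add _ _ (Finset.mem_univ l),
      ← Finset.sum_erase_add Finset.univ (fun i => Real.exp (u i - u j) * A i j) (Finset.mem_univ l)]
  have h1 : ∀ i ∈ Finset.univ.erase l,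
      Real.exp (Function.update u l w i - Function.update u l w j) * A i j
        = Real.exp (u i - u j) * A i j := by
    intro i hi
    rw [Function.update_of_ne (Finset.ne_of_mem_erase hi), Function.update_of_ne hlj.symm]
  rw [Finset.sum_congr rfl h1, Function.update_self, Function.update_of_ne hlj.symm]
  ring

lemma rowSum_update_self {n : ℕ} (A : Matrix (Fin n) (Fin n) ℝ) (u : Fin n → ℝ)
    (j : Fin n) (hdiag : A j j = 0) (d : ℝ) :
    rowSum A (Function.update u j (u j + d)) j = Real.exp d * rowSum A u j := by
  unfold rowSum
  rw [Finset.mul_sum]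
  apply Finset.sum_congr rfl
  intro i _
  by_cases hij : i = j
  · subst hij; simp [hdiag]
  · rw [Function.update_self, Function.update_of_ne hij]
    rw [show u j + d - u i = d + (u j - u i) by ring, Real.exp_add]
    ring

lemma colSum_update_self {n : ℕ} (A : Matrix (Fin n) (Fin n) ℝ) (u : Fin n → ℝ)
    (j : Fin n) (hdiag : A j j = 0) (d : ℝ) :
    colSum A (Function.update u j (u j + d)) j = Real.exp (-d) * colSum A u j := by
  unfold colSum
  rw [Finset.mul_sum]
  apply Finset.sum_congr rfl
  intro i _
  by_cases hij : i = j
  · subst hij; simp [hdiag]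
  · rw [Function.update_self, Function.update_of_ne hij]
    rw [show u i - (u j + d) = -d + (u i - u j) by ring, Real.exp_add]
    ring

/-- with E = exp d, E^2 * r = c -/
lemma exp_sq_eq {r c : ℝ} (hr : 0 < r) (hc : 0 < c) :
    Real.exp ((1/2) * (Real.log c - Real.log r)) *
      Real.exp ((1/2) * (Real.log c - Real.log r)) * r = c := by
  rw [← Real.exp_add, show (1/2) * (Real.log c - Real.log r) + (1/2) * (Real.log c - Real.log r)
      = Real.log c - Real.log r by ring, Real.exp_sub, Real.exp_log hc, Real.exp_log hr]
  field_simp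

lemma abs_key {r c d : ℝ} (hr : 0 < r) (hc : 0 < c)
    (hd : d = (1/2) * (Real.log c - Real.log r)) :
    |Real.exp (-d) - 1| * c + |Real.exp d - 1| * r = |r - c| := by
  have h2 : Real.exp d * Real.exp d * r = c := by rw [hd]; exact exp_sq_eq hr hc
  set E := Real.exp d with hE
  have hEpos : 0 < E := Real.exp_pos d
  have hinv : Real.exp (-d) = E⁻¹ := Real.exp_neg d
  rw [hinv]
  have h3 : |E⁻¹ - 1| = |E - 1| / E := by
    rw [show E⁻¹ - 1 = -((E - 1) / E) by field_simp; ring, abs_neg, abs_div, abs_of_pos hEpos]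
  rw [h3]
  have h4 : |E - 1| / E * c = |E - 1| * (E * r) := by
    rw [div_mul_eq_mul_div, ← h2]; field_simp
  rw [h4, show |E - 1| * (E * r) + |E - 1| * r = |E - 1| * (E + 1) * r by ring]
  have h5 : |E - 1| * (E + 1) = |E * E - 1| := by
    rw [show E + 1 = |E + 1| from (abs_of_pos (by linarith)).symm, ← abs_mul]
    ring_nf
  rw [h5, show |r - c| = |c - r| from abs_sub_comm r c, ← h2]
  rw [show |E * E - 1| * r = |E * E - 1| * |r| by rw [abs_of_pos hr], ← abs_mul]
  ring_nf

lemma step_bound {n : ℕ} (A : Matrix (Fin n) (Fin n) ℝ) (hA : ∀ i j, 0 ≤ A i j)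
    (u : Fin n → ℝ) (l j : Fin n) (hlj : l ≠ j) (d : ℝ) :
    |(rowSum A (Function.update u l (u l + d)) j - colSum A (Function.update u l (u l + d)) j)
      - (rowSum A u j - colSum A u j)|
    ≤ |Real.exp (-d) - 1| * (Real.exp (u j - u l) * A j l)
      + |Real.exp d - 1| * (Real.exp (u l - u j) * A l j) := by
  rw [rowSum_update_ne A u l j hlj _, colSum_update_ne A u l j hlj _]
  have e1 : Real.exp (u j - (u l + d)) = Real.exp (-d) * Real.exp (u j - u l) := by
    rw [← Real.exp_add]; ring_nf
  have e2 : Real.exp (u l + d - u j) = Real.exp d * Real.exp (u l - u j) := by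
    rw [← Real.exp_add]; ring_nf
  have h : (rowSum A u j + (Real.exp (u j - (u l + d)) - Real.exp (u j - u l)) * A j l
      - (colSum A u j + (Real.exp (u l + d - u j) - Real.exp (u l - u j)) * A l j))
      - (rowSum A u j - colSum A u j)
      = (Real.exp (-d) - 1) * (Real.exp (u j - u l) * A j l)
        - (Real.exp d - 1) * (Real.exp (u l - u j) * A l j) := by
    rw [e1, e2]; ring
  rw [h]
  refine (abs_sub _ _).trans ?_
  have ha : |(Real.exp (-d) - 1) * (Real.exp (u j - u l) * A j l)|
      = |Real.exp (-d) - 1| * (Real.exp (u j - u l) * A j l) := by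
    rw [abs_mul, abs_of_nonneg (mul_nonneg (Real.exp_pos _).le (hA j l))]
  have hb : |(Real.exp d - 1) * (Real.exp (u l - u j) * A l j)|
      = |Real.exp d - 1| * (Real.exp (u l - u j) * A l j) := by
    rw [abs_mul, abs_of_nonneg (mul_nonneg (Real.exp_pos _).le (hA l j))]
  rw [ha, hb]

lemma balance {n : ℕ} (A : Matrix (Fin n) (Fin n) ℝ) (u : Fin n → ℝ) (j : Fin n)
    (hdiag : A j j = 0) (hr : 0 < rowSum A u j) (hc : 0 < colSum A u j) :
    rowSum A (osborneUpdate A u j) j = colSum A (osborneUpdate A u j) j := by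
  unfold osborneUpdate
  rw [rowSum_update_self A u j hdiag _, colSum_update_self A u j hdiag _]
  have h2 := exp_sq_eq hr hc
  set E := Real.exp ((1/2) * (Real.log (colSum A u j) - Real.log (rowSum A u j))) with hE
  have hEpos : 0 < E := Real.exp_pos _
  rw [Real.exp_neg, ← hE, inv_mul_eq_div, eq_div_iff hEpos.ne']
  linear_combination h2

lemma col_bound {n : ℕ} (A : Matrix (Fin n) (Fin n) ℝ) (hA : ∀ i j, 0 ≤ A i j)
    (u : Fin n → ℝ) (l : Fin n) (d : ℝ)
    (hd : d = (1/2) * (Real.log (colSum A u l) - Real.log (rowSum A u l)))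
    (hr : 0 < rowSum A u l) (hc : 0 < colSum A u l) :
    ∑ j ∈ Finset.univ.filter (fun j : Fin n => j < l),
      (|Real.exp (-d) - 1| * (Real.exp (u j - u l) * A j l)
       + |Real.exp d - 1| * (Real.exp (u l - u j) * A l j))
    ≤ |rowSum A u l - colSum A u l| := by
  have h1 : ∑ j ∈ Finset.univ.filter (fun j : Fin n => j < l),
      (|Real.exp (-d) - 1| * (Real.exp (u j - u l) * A j l)
       + |Real.exp d - 1| * (Real.exp (u l - u j) * A l j))
      ≤ ∑ j : Fin n,
      (|Real.exp (-d) - 1| * (Real.exp (u j - u l) * A j l)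
       + |Real.exp d - 1| * (Real.exp (u l - u j) * A l j)) := by
    refine Finset.sum_le_sum_of_subset_of_nonneg (Finset.filter_subset _ _) ?_
    intro j _ _
    exact add_nonneg (mul_nonneg (abs_nonneg _) (mul_nonneg (Real.exp_pos _).le (hA _ _)))
      (mul_nonneg (abs_nonneg _) (mul_nonneg (Real.exp_pos _).le (hA _ _)))
  refine h1.trans ?_
  rw [Finset.sum_add_distrib, ← Finset.mul_sum, ← Finset.mul_sum]
  have hcs : (∑ j, Real.exp (u j - u l) * A j l) = colSum A u l := rfl
  have hrs : (∑ j, Real.exp (u l - u j) * A l j) = rowSum A u l := rfl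
  rw [hcs, hrs]
  exact le_of_eq (abs_key hr hc hd)

/-- Imbalance Lemma: the l1 norm of the gradient of φ at the end of a cycle is bounded by
the sum over coordinates j (other than the first) of the row/column imbalance of the j-th
pair right before it was updated within the cycle. -/
theorem osborne_cycle_imbalance (n : ℕ) (hn : 0 < n) (A : Matrix (Fin n) (Fin n) ℝ)
    (hA : ∀ i j, 0 ≤ A i j) (hdiag : ∀ i, A i i = 0)
    (v : ℕ → Fin n → ℝ)
    (hv : ∀ j : Fin n, v (j.val + 1) = osborneUpdate A (v j.val) j)
    (hpos : ∀ j : Fin n, 0 < rowSum A (v j.val) j ∧ 0 < colSum A (v j.val) j) :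
    ∑ j : Fin n, |rowSum A (v n) j - colSum A (v n) j|
      ≤ ∑ j ∈ Finset.univ.filter (fun j : Fin n => (⟨0, hn⟩ : Fin n) < j),
          |rowSum A (v j.val) j - colSum A (v j.val) j| := by
  classical
  set dd : Fin n → ℝ := fun l =>
    (1/2) * (Real.log (colSum A (v l.val) l) - Real.log (rowSum A (v l.val) l)) with hdd
  set g : Fin n → Fin n → ℝ := fun l j =>
    |Real.exp (-(dd l)) - 1| * (Real.exp (v l.val j - v l.val l) * A j l)
    + |Real.exp (dd l) - 1| * (Real.exp (v l.val l - v l.val j) * A l j) with hg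
  have hgnn : ∀ l j, 0 ≤ g l j := by
    intro l j
    exact add_nonneg (mul_nonneg (abs_nonneg _) (mul_nonneg (Real.exp_pos _).le (hA _ _)))
      (mul_nonneg (abs_nonneg _) (mul_nonneg (Real.exp_pos _).le (hA _ _)))
  have hvv : ∀ l : Fin n, v (l.val + 1) = Function.update (v l.val) l (v l.val l + dd l) := by
    intro l; rw [hv l]; rfl
  have hstep : ∀ (j l : Fin n), l ≠ j →
      |(rowSum A (v (l.val+1)) j - colSum A (v (l.val+1)) j)
        - (rowSum A (v l.val) j - colSum A (v l.val) j)| ≤ g l j := by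
    intro j l hlj
    rw [hvv l]
    exact step_bound A hA (v l.val) l j hlj (dd l)
  have hbal : ∀ j : Fin n, rowSum A (v (j.val+1)) j - colSum A (v (j.val+1)) j = 0 := by
    intro j
    rw [hv j, balance A (v j.val) j (hdiag j) (hpos j).1 (hpos j).2, sub_self]
  -- per-row telescoping bound
  have key1 : ∀ j : Fin n, |rowSum A (v n) j - colSum A (v n) j|
      ≤ ∑ l : Fin n, (if j < l then g l j else 0) := by
    intro j
    set f : ℕ → ℝ := fun m => rowSum A (v m) j - colSum A (v m) j with hf
    set F : ℕ → ℝ := fun m => if h : m < n then (if j < ⟨m, h⟩ then g ⟨m, h⟩ j else 0) else 0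
      with hF
    have h1 : ∑ m ∈ Finset.Ico (j.val+1) n, (f (m+1) - f m) = f n - f (j.val+1) := by
      rw [Finset.sum_Ico_eq_sub _ j.isLt, Finset.sum_range_sub, Finset.sum_range_sub]; ring
    have hz : f (j.val+1) = 0 := hbal j
    have htel : f n = ∑ m ∈ Finset.Ico (j.val+1) n, (f (m+1) - f m) := by
      rw [h1, hz]; ring
    have h2 : |f n| ≤ ∑ m ∈ Finset.Ico (j.val+1) n, |f (m+1) - f m| := by
      rw [htel]; exact Finset.abs_sum_le_sum_abs _ _
    have h3 : ∑ m ∈ Finset.Ico (j.val+1) n, |f (m+1) - f m|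
        ≤ ∑ m ∈ Finset.Ico (j.val+1) n, F m := by
      refine Finset.sum_le_sum ?_
      intro m hm
      rw [Finset.mem_Ico] at hm
      have hmn : m < n := hm.2
      have hjm : j < (⟨m, hmn⟩ : Fin n) := by
        rw [Fin.lt_def]; exact hm.1
      have hne : (⟨m, hmn⟩ : Fin n) ≠ j := by
        intro hcontra; rw [hcontra] at hjm; exact lt_irrefl j hjm
      have := hstep j ⟨m, hmn⟩ hne
      rw [hF]
      simp only [hmn, dif_pos, hjm, if_pos]
      exact this
    have h4 : ∑ m ∈ Finset.Ico (j.val+1) n, F m ≤ ∑ m ∈ Finset.range n, F m := by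
      refine Finset.sum_le_sum_of_subset_of_nonneg ?_ ?_
      · intro m hm; rw [Finset.mem_Ico] at hm; exact Finset.mem_range.mpr hm.2
      · intro m _ _
        rw [hF]
        dsimp only
        split
        · split
          · exact hgnn _ _
          · exact le_rfl
        · exact le_rfl
    have h5 : ∑ m ∈ Finset.range n, F m = ∑ l : Fin n, (if j < l then g l j else 0) := by
      rw [← Fin.sum_univ_eq_sum_range F n]
      refine Finset.sum_congr rfl ?_
      intro l _
      rw [hF]
      simp only [l.isLt, dif_pos, Fin.eta]
    show |f n| ≤ ∑ l : Fin n, (if j < l then g l j else 0)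
    calc |f n| ≤ _ := h2
      _ ≤ _ := h3
      _ ≤ _ := h4
      _ = _ := h5
  -- sum over j, swap, bound per l
  calc ∑ j : Fin n, |rowSum A (v n) j - colSum A (v n) j|
      ≤ ∑ j : Fin n, ∑ l : Fin n, (if j < l then g l j else 0) := Finset.sum_le_sum fun j _ => key1 j
    _ = ∑ l : Fin n, ∑ j : Fin n, (if j < l then g l j else 0) := Finset.sum_comm
    _ = ∑ l : Fin n, ∑ j ∈ Finset.univ.filter (fun j : Fin n => j < l), g l j := by
        refine Finset.sum_congr rfl fun l _ => ?_
        rw [Finset.sum_filter]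
    _ ≤ ∑ l : Fin n, (if (⟨0, hn⟩ : Fin n) < l
          then |rowSum A (v l.val) l - colSum A (v l.val) l| else 0) := by
        refine Finset.sum_le_sum fun l _ => ?_
        by_cases h : (⟨0, hn⟩ : Fin n) < l
        · rw [if_pos h]
          exact col_bound A hA (v l.val) l (dd l) rfl (hpos l).1 (hpos l).2
        · rw [if_neg h]
          have hempty : Finset.univ.filter (fun j : Fin n => j < l) = ∅ := by
            refine Finset.filter_eq_empty_iff.mpr ?_
            intro j _ hj
            have h0 : (⟨0, hn⟩ : Fin n) ≤ j := by rw [Fin.le_def]; exact Nat.zero_le _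
            exact h (lt_of_le_of_lt h0 hj)
          rw [hempty, Finset.sum_empty]
    _ = ∑ j ∈ Finset.univ.filter (fun j : Fin n => (⟨0, hn⟩ : Fin n) < j),
          |rowSum A (v j.val) j - colSum A (v j.val) j| := (Finset.sum_filter _ _).symm
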